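/- Let h, f ∈ ℝ⟦X⟧ have constant coefficient 0 and nonzero linear coefficient, with compositional inverses h̄, f̄ (series with constant coefficient 0 satisfying h∘h̄ = h̄∘h = X and f∘f̄ = f̄∘f = X), and let A_h, A_f ∈ ℝ⟦X⟧ satisfy h̄·A_h = X and f̄·A_f = X (so A_h and A_f are units). Then h∘f = f∘h if and only if A_f · (A_h ∘ (X·A_f⁻¹)) = A_h · (A_f ∘ (X·A_h⁻¹)). -/

import Mathlib

open PowerSeries

/-- Substitution (composition) of formal power series: `psComp g f = g ∘ f`,
the substitution of `f` into `g`.  When `f` has zero constant coefficient, the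
`n`-th coefficient of `g ∘ f` is `∑_{k=0}^{n} g_k · [zⁿ] fᵏ`. -/
noncomputable def psComp (g f : PowerSeries ℝ) : PowerSeries ℝ :=
  PowerSeries.mk fun n => ∑ k ∈ Finset.range (n + 1),
    PowerSeries.coeff k g * PowerSeries.coeff n (f ^ k)

lemma coeff_pow_zero {f : PowerSeries ℝ} (hf : constantCoeff f = 0)
    {k n : ℕ} (h : n < k) : coeff n (f ^ k) = 0 := by
  have : (X : PowerSeries ℝ) ^ k ∣ f ^ k :=
    pow_dvd_pow_of_dvd (PowerSeries.X_dvd_iff.mpr hf) k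
  exact PowerSeries.X_pow_dvd_iff.mp this n h

lemma coeff_psComp (g f : PowerSeries ℝ) (n : ℕ) :
    coeff n (psComp g f) = ∑ k ∈ Finset.range (n + 1),
      coeff k g * coeff n (f ^ k) := by
  simp [psComp]

lemma psComp_congr {g g' : PowerSeries ℝ} (f : PowerSeries ℝ) {n : ℕ}
    (h : ∀ k ≤ n, coeff k g = coeff k g') :
    coeff n (psComp g f) = coeff n (psComp g' f) := by
  rw [coeff_psComp, coeff_psComp]
  exact Finset.sum_congr rfl fun k hk => by
    rw [h k (Finset.mem_range_succ_iff.mp hk)]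

lemma coeff_aeval {f : PowerSeries ℝ} (hf : constantCoeff f = 0)
    (P : Polynomial ℝ) (n : ℕ) :
    coeff n (Polynomial.aeval f P) = ∑ k ∈ Finset.range (n + 1),
      P.coeff k * coeff n (f ^ k) := by
  have hdeg : P.natDegree < max (P.natDegree + 1) (n + 1) :=
    lt_of_lt_of_le (Nat.lt_succ_self _) (le_max_left _ _)
  rw [Polynomial.aeval_eq_sum_range' hdeg, map_sum]
  have hsub : Finset.range (n + 1) ⊆ Finset.range (max (P.natDegree + 1) (n + 1)) :=
    Finset.range_subset_range.mpr (le_max_right _ _)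
  have hvan : ∀ k ∈ Finset.range (max (P.natDegree + 1) (n + 1)),
      k ∉ Finset.range (n + 1) → coeff n (P.coeff k • f ^ k) = 0 := by
    intro k _ hk2
    have hnk : n < k := by
      by_contra hn
      exact hk2 (Finset.mem_range.mpr (Nat.lt_succ_of_le (Nat.le_of_not_lt hn)))
    rw [map_smul, smul_eq_mul, coeff_pow_zero hf hnk, mul_zero]
  rw [← Finset.sum_subset hsub hvan]
  exact Finset.sum_congr rfl fun k _ => by rw [map_smul, smul_eq_mul]

lemma psComp_coe {f : PowerSeries ℝ} (hf : constantCoeff f = 0)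
    (P : Polynomial ℝ) : psComp (↑P) f = Polynomial.aeval f P := by
  ext n
  rw [coeff_psComp, coeff_aeval hf]
  exact Finset.sum_congr rfl fun k _ => by rw [Polynomial.coeff_coe]

lemma constantCoeff_psComp (g f : PowerSeries ℝ) :
    constantCoeff (psComp g f) = constantCoeff g := by
  rw [← coeff_zero_eq_constantCoeff_apply, coeff_psComp]
  simp

lemma psComp_mul {f : PowerSeries ℝ} (hf : constantCoeff f = 0)
    (g₁ g₂ : PowerSeries ℝ) :
    psComp (g₁ * g₂) f = psComp g₁ f * psComp g₂ f := by
  ext n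
  set P := trunc (n + 1) g₁ with hP
  set Q := trunc (n + 1) g₂ with hQ
  have hPc : ∀ k ≤ n, Polynomial.coeff P k = coeff k g₁ := fun k hk => by
    rw [hP, coeff_trunc, if_pos (Nat.lt_succ_of_le hk)]
  have hQc : ∀ k ≤ n, Polynomial.coeff Q k = coeff k g₂ := fun k hk => by
    rw [hQ, coeff_trunc, if_pos (Nat.lt_succ_of_le hk)]
  have h1 : coeff n (psComp (g₁ * g₂) f) = coeff n (psComp (↑(P * Q)) f) := by
    apply psComp_congr
    intro k hk
    rw [Polynomial.coeff_coe, PowerSeries.coeff_mul, Polynomial.coeff_mul]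
    exact Finset.sum_congr rfl fun p hp => by
      rw [hPc p.1 (le_trans (Finset.HasAntidiagonal.antidiagonal.fst_le hp) hk),
        hQc p.2 (le_trans (Finset.HasAntidiagonal.antidiagonal.snd_le hp) hk)]
  rw [h1, psComp_coe hf, map_mul, ← psComp_coe hf P, ← psComp_coe hf Q,
    PowerSeries.coeff_mul, PowerSeries.coeff_mul]
  refine Finset.sum_congr rfl fun p hp => ?_
  have e1 : coeff p.1 (psComp (↑P) f) = coeff p.1 (psComp g₁ f) :=
    psComp_congr f fun k hk => by
      rw [Polynomial.coeff_coe, hPc k (le_trans hk (Finset.HasAntidiagonal.antidiagonal.fst_le hp))]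
  have e2 : coeff p.2 (psComp (↑Q) f) = coeff p.2 (psComp g₂ f) :=
    psComp_congr f fun k hk => by
      rw [Polynomial.coeff_coe, hQc k (le_trans hk (Finset.HasAntidiagonal.antidiagonal.snd_le hp))]
  rw [e1, e2]

lemma psComp_add (g₁ g₂ f : PowerSeries ℝ) :
    psComp (g₁ + g₂) f = psComp g₁ f + psComp g₂ f := by
  ext n
  simp [coeff_psComp, add_mul, Finset.sum_add_distrib]

lemma psComp_C (a : ℝ) (f : PowerSeries ℝ) : psComp (C a) f = C a := by
  ext n
  rw [coeff_psComp]
  rw [Finset.sum_eq_single 0]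
  · simp [PowerSeries.coeff_C]
  · intro k _ hk
    simp [PowerSeries.coeff_C, hk]
  · intro hn
    exact absurd (Finset.mem_range.mpr (Nat.succ_pos n)) hn

lemma psComp_one (f : PowerSeries ℝ) : psComp 1 f = 1 := by
  have := psComp_C 1 f
  rwa [map_one] at this

lemma psComp_X {e : PowerSeries ℝ} (he : constantCoeff e = 0) :
    psComp X e = e := by
  ext n
  rw [coeff_psComp]
  rw [Finset.sum_eq_single 1]
  · simp
  · intro k _ hk
    simp [PowerSeries.coeff_X, hk]
  · intro hn
    simp only [Finset.mem_range] at hn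
    have hn0 : n = 0 := by omega
    subst hn0
    simp [he]

lemma psComp_X_right (g : PowerSeries ℝ) : psComp g X = g := by
  ext n
  rw [coeff_psComp]
  rw [Finset.sum_eq_single n]
  · simp
  · intro k _ hk
    simp [PowerSeries.coeff_X_pow, (Ne.symm hk)]
  · intro hn
    exact absurd (Finset.mem_range.mpr (Nat.lt_succ_self n)) hn

lemma psComp_pow {f : PowerSeries ℝ} (hf : constantCoeff f = 0)
    (g : PowerSeries ℝ) (m : ℕ) : psComp (g ^ m) f = (psComp g f) ^ m := by
  induction m with
  | zero => simpa using psComp_one f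
  | succ m ih => rw [pow_succ, psComp_mul hf, ih, pow_succ]

lemma psComp_aeval {f e : PowerSeries ℝ} (he : constantCoeff e = 0)
    (P : Polynomial ℝ) :
    psComp (Polynomial.aeval f P) e = Polynomial.aeval (psComp f e) P := by
  induction P using Polynomial.induction_on' with
  | add p q hp hq => rw [map_add, map_add, psComp_add, hp, hq]
  | monomial m a =>
    rw [Polynomial.aeval_monomial, Polynomial.aeval_monomial, psComp_mul he,
      psComp_pow he]
    congr 1
    have : (algebraMap ℝ (PowerSeries ℝ)) a = C a := rfl
    rw [this, psComp_C]

lemma psComp_assoc {f e : PowerSeries ℝ} (g : PowerSeries ℝ)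
    (hf : constantCoeff f = 0) (he : constantCoeff e = 0) :
    psComp (psComp g f) e = psComp g (psComp f e) := by
  have hfe : constantCoeff (psComp f e) = 0 := by
    rw [constantCoeff_psComp, hf]
  ext n
  set P := trunc (n + 1) g with hP
  have hPc : ∀ k ≤ n, coeff k g = coeff k (↑P : PowerSeries ℝ) := fun k hk => by
    rw [Polynomial.coeff_coe, hP, coeff_trunc, if_pos (Nat.lt_succ_of_le hk)]
  have h1 : coeff n (psComp (psComp g f) e) = coeff n (psComp (psComp (↑P) f) e) := by
    apply psComp_congr
    intro k hk
    exact psComp_congr f fun j hj => hPc j (le_trans hj hk)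
  rw [h1, psComp_coe hf, psComp_aeval he,
    ← psComp_coe hfe]
  exact (psComp_congr _ fun k hk => hPc k hk).symm

theorem stmt1 (h f hbar fbar Ah Af : PowerSeries ℝ)
    (hh0 : constantCoeff h = 0) (hh1 : coeff 1 h ≠ 0)
    (hf0 : constantCoeff f = 0) (hf1 : coeff 1 f ≠ 0)
    (hhb0 : constantCoeff hbar = 0) (hfb0 : constantCoeff fbar = 0)
    (hhb1 : psComp h hbar = X) (hhb2 : psComp hbar h = X)
    (hfb1 : psComp f fbar = X) (hfb2 : psComp fbar f = X)
    (hAh : hbar * Ah = X) (hAf : fbar * Af = X) :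
    psComp h f = psComp f h ↔
      Af * psComp Ah (X * Af⁻¹) = Ah * psComp Af (X * Ah⁻¹) := by

  have hAf0 : constantCoeff Af ≠ 0 := by
    have h1 := congrArg (coeff 1) hAf
    simp [PowerSeries.coeff_mul, Finset.Nat.antidiagonal_succ, hfb0] at h1
    intro hz
    rw [hz, mul_zero] at h1
    exact one_ne_zero h1.symm
  have hAh0 : constantCoeff Ah ≠ 0 := by
    have h1 := congrArg (coeff 1) hAh
    simp [PowerSeries.coeff_mul, Finset.Nat.antidiagonal_succ, hhb0] at h1
    intro hz
    rw [hz, mul_zero] at h1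
    exact one_ne_zero h1.symm
  have hfbar : X * Af⁻¹ = fbar := by
    rw [← hAf, mul_assoc, PowerSeries.mul_inv_cancel Af hAf0, mul_one]
  have hhbar : X * Ah⁻¹ = hbar := by
    rw [← hAh, mul_assoc, PowerSeries.mul_inv_cancel Ah hAh0, mul_one]
  rw [hfbar, hhbar]
  set u := Af * psComp Ah fbar with hu
  set v := Ah * psComp Af hbar with hv
  set c := psComp fbar hbar with hc
  set d := psComp hbar fbar with hd
  have hud : u * d = X := by
    have h0 : psComp (hbar * Ah) fbar = psComp X fbar := by rw [hAh]
    rw [psComp_mul hfb0, psComp_X hfb0] at h0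
    calc u * d = Af * (psComp hbar fbar * psComp Ah fbar) := by rw [hu, hd]; ring
      _ = Af * fbar := by rw [h0]
      _ = X := by rw [mul_comm]; exact hAf
  have hvc : v * c = X := by
    have h0 : psComp (fbar * Af) hbar = psComp X hbar := by rw [hAf]
    rw [psComp_mul hhb0, psComp_X hhb0] at h0
    calc v * c = Ah * (psComp fbar hbar * psComp Af hbar) := by rw [hv, hc]; ring
      _ = Ah * hbar := by rw [h0]
      _ = X := by rw [mul_comm]; exact hAh
  have hc0 : constantCoeff c = 0 := by rw [hc, constantCoeff_psComp]; exact hfb0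
  have hd0 : constantCoeff d = 0 := by rw [hd, constantCoeff_psComp]; exact hhb0
  have hF0 : constantCoeff (psComp h f) = 0 := by rw [constantCoeff_psComp]; exact hh0
  have hG0 : constantCoeff (psComp f h) = 0 := by rw [constantCoeff_psComp]; exact hf0
  have hFc : psComp (psComp h f) c = X := by
    rw [psComp_assoc h hf0 hc0]
    have hstep : psComp f c = hbar := by
      rw [hc, ← psComp_assoc f hfb0 hhb0, hfb1, psComp_X hhb0]
    rw [hstep, hhb1]
  have hcF : psComp c (psComp h f) = X := by
    rw [hc, psComp_assoc fbar hhb0 hF0]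
    have hstep : psComp hbar (psComp h f) = f := by
      rw [← psComp_assoc hbar hh0 hf0, hhb2, psComp_X hf0]
    rw [hstep, hfb2]
  have hGd : psComp (psComp f h) d = X := by
    rw [psComp_assoc f hh0 hd0]
    have hstep : psComp h d = fbar := by
      rw [hd, ← psComp_assoc h hhb0 hfb0, hhb1, psComp_X hfb0]
    rw [hstep, hfb1]
  have hdG : psComp d (psComp f h) = X := by
    rw [hd, psComp_assoc hbar hfb0 hG0]
    have hstep : psComp fbar (psComp f h) = h := by
      rw [← psComp_assoc fbar hf0 hh0, hfb2, psComp_X hh0]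
    rw [hstep, hhb2]
  constructor
  · intro hEq
    have hcd : c = d :=
      calc c = psComp c X := (psComp_X_right c).symm
        _ = psComp c (psComp (psComp f h) d) := by rw [hGd]
        _ = psComp (psComp c (psComp f h)) d := (psComp_assoc c hG0 hd0).symm
        _ = psComp X d := by rw [← hEq, hcF]
        _ = d := psComp_X hd0
    have hd_ne : d ≠ 0 := by
      intro hdz
      rw [hdz, mul_zero] at hud
      exact PowerSeries.X_ne_zero hud.symm
    have : u * d = v * d := by rw [hud, ← hcd, hvc]
    exact mul_right_cancel₀ hd_ne this
  · intro hEq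
    have hu_ne : u ≠ 0 := by
      intro huz
      rw [huz, zero_mul] at hud
      exact PowerSeries.X_ne_zero hud.symm
    have h2 : u * c = X := by rw [hEq]; exact hvc
    have hcd : c = d := mul_left_cancel₀ hu_ne (h2.trans hud.symm)
    have hcG : psComp c (psComp f h) = X := by rw [hcd]; exact hdG
    calc psComp h f = psComp (psComp h f) X := (psComp_X_right _).symm
      _ = psComp (psComp h f) (psComp c (psComp f h)) := by rw [hcG]
      _ = psComp (psComp (psComp h f) c) (psComp f h) := (psComp_assoc _ hc0 hG0).symm
      _ = psComp X (psComp f h) := by rw [hFc]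
      _ = psComp f h := psComp_X hG0
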